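/- Let L be a finite connected simple graph that is the line graph of some simple graph, and suppose every eigenvalue of the adjacency matrix of L has absolute value at most 2 (i.e., the spectral radius of L is at most 2). Then L is isomorphic to a cycle graph or to a path graph. -/

import Mathlib

open SimpleGraph

section AuxLemmas

open Matrix Finset Pointwise

variable {VL : Type} [Fintype VL] [DecidableEq VL]

set_option linter.unusedSectionVars false

lemma aux_quadform (L : SimpleGraph VL) [DecidableRel L.Adj]
    (hspec : ∀ μ ∈ spectrum ℝ (L.adjMatrix ℝ), |μ| ≤ 2) (x : VL → ℝ) :
    x ⬝ᵥ ((L.adjMatrix ℝ) *ᵥ x) ≤ 2 * (x ⬝ᵥ x) := by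
  set A := L.adjMatrix ℝ with hAdef
  have hA : A.IsHermitian := by
    have h := L.isSymm_adjMatrix (α := ℝ)
    rw [Matrix.IsHermitian, Matrix.conjTranspose_eq_transpose_of_trivial]; exact h
  set M := (2:ℝ) • (1 : Matrix VL VL ℝ) - A with hMdef
  have hM : M.IsHermitian := by
    simp only [hMdef, Matrix.IsHermitian, Matrix.conjTranspose_sub, Matrix.conjTranspose_smul, hA.eq, star_trivial, Matrix.conjTranspose_one]
  have hpsd : M.PosSemidef := by
    apply hM.posSemidef_iff_eigenvalues_nonneg.mpr
    intro i
    have hM2 : M = algebraMap ℝ (Matrix VL VL ℝ) 2 - A := by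
      rw [Algebra.algebraMap_eq_smul_one]
    have h1 : hM.eigenvalues i ∈ ({(2:ℝ)} : Set ℝ) - spectrum ℝ A := by
      rw [spectrum.singleton_sub_eq, ← hM2]
      exact hM.eigenvalues_mem_spectrum_real i
    obtain ⟨r, hr2, s, hs, hrs⟩ := Set.mem_sub.mp h1
    rcases Set.mem_singleton_iff.mp hr2
    have h2 := abs_le.mp (hspec s hs)
    rw [Pi.zero_apply]; linarith [hrs, h2.2]
  have h0 := hpsd.dotProduct_mulVec_nonneg x
  simp only [star_trivial, RCLike.re_to_real, hMdef, Matrix.sub_mulVec,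
    Matrix.smul_mulVec, Matrix.one_mulVec, dotProduct_sub,
    dotProduct_smul, smul_eq_mul] at h0
  linarith

lemma aux_deg3 (L : SimpleGraph VL) [DecidableRel L.Adj] {x a b c : VL}
    (h1 : L.Adj x a) (h2 : L.Adj x b) (h3 : L.Adj x c)
    (hab : a ≠ b) (hac : a ≠ c) (hbc : b ≠ c) : 3 ≤ L.degree x := by
  have hsub : ({a, b, c} : Finset VL) ⊆ L.neighborFinset x := by
    intro w hw
    simp only [Finset.mem_insert, Finset.mem_singleton] at hw
    rcases hw with rfl | rfl | rfl <;> simp [SimpleGraph.mem_neighborFinset, h1, h2, h3]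
  have hcard : ({a, b, c} : Finset VL).card = 3 := by
    rw [Finset.card_insert_of_notMem (by simp [hab, hac]),
      Finset.card_insert_of_notMem (by simp [hbc]), Finset.card_singleton]
  calc 3 = ({a, b, c} : Finset VL).card := hcard.symm
    _ ≤ _ := Finset.card_le_card hsub

lemma aux_paw (L : SimpleGraph VL) [DecidableRel L.Adj]
    (hq : ∀ x : VL → ℝ, x ⬝ᵥ ((L.adjMatrix ℝ) *ᵥ x) ≤ 2 * (x ⬝ᵥ x))
    {v a b c : VL} (hva : L.Adj v a) (hvb : L.Adj v b) (hvc : L.Adj v c)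
    (hab : L.Adj a b) (hac : a ≠ c) (hbc : b ≠ c) : False := by
  have hvna : v ≠ a := hva.ne
  have hvnb : v ≠ b := hvb.ne
  have hvnc : v ≠ c := hvc.ne
  have hanb : a ≠ b := hab.ne
  set A := L.adjMatrix ℝ with hAdef
  set x : VL → ℝ := fun w => if w = v then 13 else if w = a then 11 else
    if w = b then 11 else if w = c then 6 else 0 with hxdef
  have hxv : x v = 13 := by simp [hxdef]
  have hxa : x a = 11 := by simp [hxdef, hvna.symm]
  have hxb : x b = 11 := by simp [hxdef, hvnb.symm, hanb.symm]
  have hxc : x c = 6 := by simp [hxdef, hvnc.symm, hac.symm, hbc.symm]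
  have hxnn : ∀ w, 0 ≤ x w := by
    intro w; simp only [hxdef]; split_ifs <;> norm_num
  have hAnn : ∀ i j, 0 ≤ A i j := by
    intro i j; simp only [hAdef, SimpleGraph.adjMatrix_apply]; split_ifs <;> norm_num
  -- value of x ⬝ᵥ x
  have hxx : x ⬝ᵥ x = 447 := by
    rw [dotProduct]
    rw [← Finset.sum_subset (Finset.subset_univ ({v, a, b, c} : Finset VL))
      (by intro w _ hw
          simp only [Finset.mem_insert, Finset.mem_singleton, not_or] at hw
          simp [hxdef, hw.1, hw.2.1, hw.2.2.1, hw.2.2.2])]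
    rw [Finset.sum_insert (by simp [hvna, hvnb, hvnc]),
      Finset.sum_insert (by simp [hanb, hac]),
      Finset.sum_insert (by simp [hbc]), Finset.sum_singleton]
    rw [hxv, hxa, hxb, hxc]; norm_num
  -- lower bounds on rows of A *ᵥ x
  have hrow : ∀ (i : VL) (s : Finset VL), (∑ j ∈ s, A i j * x j) ≤ (A *ᵥ x) i := by
    intro i s
    rw [Matrix.mulVec, dotProduct]
    exact Finset.sum_le_sum_of_subset_of_nonneg (Finset.subset_univ s)
      (fun j _ _ => mul_nonneg (hAnn i j) (hxnn j))
  have hAv : ∀ (i j : VL), L.Adj i j → A i j = 1 := by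
    intro i j h; simp [hAdef, h]
  have hrv : (28 : ℝ) ≤ (A *ᵥ x) v := by
    refine le_trans ?_ (hrow v {a, b, c})
    rw [Finset.sum_insert (by simp [hanb, hac]), Finset.sum_insert (by simp [hbc]),
      Finset.sum_singleton, hAv v a hva, hAv v b hvb, hAv v c hvc, hxa, hxb, hxc]
    norm_num
  have hra : (24 : ℝ) ≤ (A *ᵥ x) a := by
    refine le_trans ?_ (hrow a {v, b})
    rw [Finset.sum_insert (by simp [hvnb]), Finset.sum_singleton,
      hAv a v hva.symm, hAv a b hab, hxv, hxb]
    norm_num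
  have hrb : (24 : ℝ) ≤ (A *ᵥ x) b := by
    refine le_trans ?_ (hrow b {v, a})
    rw [Finset.sum_insert (by simp [hvna]), Finset.sum_singleton,
      hAv b v hvb.symm, hAv b a hab.symm, hxv, hxa]
    norm_num
  have hrc : (13 : ℝ) ≤ (A *ᵥ x) c := by
    refine le_trans ?_ (hrow c {v})
    rw [Finset.sum_singleton, hAv c v hvc.symm, hxv]
    norm_num
  have hmulnn : ∀ i, 0 ≤ (A *ᵥ x) i := by
    intro i
    rw [Matrix.mulVec, dotProduct]
    exact Finset.sum_nonneg fun j _ => mul_nonneg (hAnn i j) (hxnn j)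
  have hbig : (970 : ℝ) ≤ x ⬝ᵥ (A *ᵥ x) := by
    have h1 : (∑ i ∈ ({v, a, b, c} : Finset VL), x i * (A *ᵥ x) i) ≤ x ⬝ᵥ (A *ᵥ x) := by
      rw [dotProduct]
      exact Finset.sum_le_sum_of_subset_of_nonneg (Finset.subset_univ _)
        (fun i _ _ => mul_nonneg (hxnn i) (hmulnn i))
    refine le_trans ?_ h1
    rw [Finset.sum_insert (by simp [hvna, hvnb, hvnc]),
      Finset.sum_insert (by simp [hanb, hac]),
      Finset.sum_insert (by simp [hbc]), Finset.sum_singleton,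
      hxv, hxa, hxb, hxc]
    nlinarith [hrv, hra, hrb, hrc]
  have := hq x
  rw [hxx] at this
  linarith

lemma aux_line_pigeonhole {V' : Type*} (Γ : SimpleGraph V') (e f g h : Γ.edgeSet)
    (hef : Γ.lineGraph.Adj e f) (heg : Γ.lineGraph.Adj e g) (heh : Γ.lineGraph.Adj e h)
    (hfg : f ≠ g) (hfh : f ≠ h) (hgh : g ≠ h) :
    Γ.lineGraph.Adj f g ∨ Γ.lineGraph.Adj f h ∨ Γ.lineGraph.Adj g h := by
  obtain ⟨x, y, hxy⟩ : ∃ x y, (e : Sym2 V') = s(x, y) :=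
    (e : Sym2 V').inductionOn fun x y => ⟨x, y, rfl⟩
  obtain ⟨-, wf, hwfe, hwff⟩ := SimpleGraph.lineGraph_adj_iff_exists.mp hef
  obtain ⟨-, wg, hwge, hwgg⟩ := SimpleGraph.lineGraph_adj_iff_exists.mp heg
  obtain ⟨-, wh, hwhe, hwhh⟩ := SimpleGraph.lineGraph_adj_iff_exists.mp heh
  rw [hxy, Sym2.mem_iff] at hwfe hwge hwhe
  have key : ∀ (a b : Γ.edgeSet) (w : V'), a ≠ b → w ∈ (a : Sym2 V') → w ∈ (b : Sym2 V') →
      Γ.lineGraph.Adj a b := fun a b w hab ha hb =>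
    SimpleGraph.lineGraph_adj_iff_exists.mpr ⟨hab, w, ha, hb⟩
  rcases hwfe with h1 | h1 <;> rcases hwge with h2 | h2 <;> rcases hwhe with h3 | h3
  · exact Or.inl (key f g x hfg (h1 ▸ hwff) (h2 ▸ hwgg))
  · exact Or.inl (key f g x hfg (h1 ▸ hwff) (h2 ▸ hwgg))
  · exact Or.inr (Or.inl (key f h x hfh (h1 ▸ hwff) (h3 ▸ hwhh)))
  · exact Or.inr (Or.inr (key g h y hgh (h2 ▸ hwgg) (h3 ▸ hwhh)))
  · exact Or.inr (Or.inr (key g h x hgh (h2 ▸ hwgg) (h3 ▸ hwhh)))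
  · exact Or.inr (Or.inl (key f h y hfh (h1 ▸ hwff) (h3 ▸ hwhh)))
  · exact Or.inl (key f g y hfg (h1 ▸ hwff) (h2 ▸ hwgg))
  · exact Or.inl (key f g y hfg (h1 ▸ hwff) (h2 ▸ hwgg))

lemma aux_deg_le_two (L : SimpleGraph VL) [DecidableRel L.Adj]
    (hline : ∃ (V' : Type) (Γ : SimpleGraph V'), Nonempty (L ≃g Γ.lineGraph))
    (hq : ∀ x : VL → ℝ, x ⬝ᵥ ((L.adjMatrix ℝ) *ᵥ x) ≤ 2 * (x ⬝ᵥ x)) :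
    ∀ v, L.degree v ≤ 2 := by
  obtain ⟨V', Γ, ⟨φ⟩⟩ := hline
  intro v
  by_contra hdeg
  push_neg at hdeg
  rw [SimpleGraph.degree] at hdeg
  obtain ⟨a, b, c, ha, hb, hc, hab, hac, hbc⟩ := Finset.two_lt_card_iff.mp hdeg
  rw [SimpleGraph.mem_neighborFinset] at ha hb hc
  have hinj := φ.toEquiv.injective
  have pair : L.Adj a b ∨ L.Adj a c ∨ L.Adj b c := by
    have h1 := aux_line_pigeonhole Γ (φ v) (φ a) (φ b) (φ c)
      (φ.map_adj_iff.mpr ha) (φ.map_adj_iff.mpr hb) (φ.map_adj_iff.mpr hc)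
      (fun hh => hab (hinj hh)) (fun hh => hac (hinj hh)) (fun hh => hbc (hinj hh))
    rcases h1 with h1 | h1 | h1
    · exact Or.inl (φ.map_adj_iff.mp h1)
    · exact Or.inr (Or.inl (φ.map_adj_iff.mp h1))
    · exact Or.inr (Or.inr (φ.map_adj_iff.mp h1))
  rcases pair with hp | hp | hp
  · exact aux_paw L hq ha hb hc hp hac hbc
  · exact aux_paw L hq ha hc hb hp hab hbc.symm
  · exact aux_paw L hq hb hc ha hp hab.symm hac.symm

lemma aux_getVert_inj {V : Type*} {G : SimpleGraph V} {u v : V} {p : G.Walk u v}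
    (hp : p.IsPath) :
    ∀ i j, i ≤ p.length → j ≤ p.length → p.getVert i = p.getVert j → i = j := by
  induction p with
  | nil => intro i j hi hj _; simp_all
  | @cons u w v h q ih =>
    rw [SimpleGraph.Walk.cons_isPath_iff] at hp
    intro i j hi hj heq
    match i, j with
    | 0, 0 => rfl
    | 0, j+1 =>
      exfalso
      apply hp.2
      rw [SimpleGraph.Walk.mem_support_iff_exists_getVert]
      refine ⟨j, ?_, by simpa using hj⟩
      simpa [SimpleGraph.Walk.getVert_zero, SimpleGraph.Walk.getVert_cons_succ] using heq.symm
    | i+1, 0 =>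
      exfalso
      apply hp.2
      rw [SimpleGraph.Walk.mem_support_iff_exists_getVert]
      refine ⟨i, ?_, by simpa using hi⟩
      simpa [SimpleGraph.Walk.getVert_zero, SimpleGraph.Walk.getVert_cons_succ] using heq
    | i+1, j+1 =>
      have := ih hp.1 i j (by simpa using hi) (by simpa using hj)
        (by simpa [SimpleGraph.Walk.getVert_cons_succ] using heq)
      omega

lemma aux_fin_sub {n : ℕ} (hn : 3 ≤ n) (i j : Fin n) :
    ((j - i : Fin n) : ℕ) = 1 ↔ ((j : ℕ) = (i : ℕ) + 1 ∨ ((i : ℕ) = n - 1 ∧ (j : ℕ) = 0)) := by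
  rcases i with ⟨i, hi⟩; rcases j with ⟨j, hj⟩
  rw [Fin.sub_def]
  simp only
  rcases Nat.lt_or_ge (n - i + j) n with h | h
  · rw [Nat.mod_eq_of_lt h]; omega
  · rw [Nat.mod_eq_sub_mod h, Nat.mod_eq_of_lt (by omega)]; omega

end AuxLemmas

open Matrix Finset in
/-- **Corollary 4.4.** A connected line graph whose adjacency matrix has all of its
eigenvalues of absolute value at most `2` must be a cycle or a path. -/
theorem lineGraph_spectralRadius_le_two
    {VL : Type} [Fintype VL] [DecidableEq VL] (L : SimpleGraph VL)
    [DecidableRel L.Adj] (hconn : L.Connected)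
    (hline : ∃ (V' : Type) (Γ : SimpleGraph V'), Nonempty (L ≃g Γ.lineGraph))
    (hspec : ∀ μ ∈ spectrum ℝ (L.adjMatrix ℝ), |μ| ≤ 2) :
    (∃ n : ℕ, 3 ≤ n ∧ Nonempty (L ≃g SimpleGraph.cycleGraph n)) ∨
      ∃ n : ℕ, Nonempty (L ≃g SimpleGraph.pathGraph n) := by
  classical
  have hq := aux_quadform L hspec
  have hdeg := aux_deg_le_two L hline hq
  obtain ⟨v0⟩ := hconn.nonempty
  set P : ℕ → Prop := fun m => ∃ (u v : VL) (w : L.Walk u v), w.IsPath ∧ w.length = m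
    with hPdef
  have hP0 : P 0 := ⟨v0, v0, SimpleGraph.Walk.nil, SimpleGraph.Walk.IsPath.nil, rfl⟩
  have hbound : ∀ m, P m → m ≤ Fintype.card VL := by
    rintro m ⟨u, v, w, hw, rfl⟩; exact hw.length_lt.le
  set k := Nat.findGreatest P (Fintype.card VL) with hkdef
  have hk : P k := Nat.findGreatest_spec (Nat.zero_le _) hP0
  have hmax : ∀ m, P m → m ≤ k := fun m hm => Nat.le_findGreatest (hbound m hm) hm
  obtain ⟨u, v, w, hw, hwl⟩ := hk
  -- the path w spans all vertices
  have hsupp : ∀ y : VL, y ∈ w.support := by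
    by_contra hy
    push_neg at hy
    obtain ⟨y, hy⟩ := hy
    obtain ⟨q⟩ := hconn.preconnected u y
    obtain ⟨d, _, hd1, hd2⟩ := q.exists_boundary_dart {x | x ∈ w.support}
      (by simp [SimpleGraph.Walk.start_mem_support]) hy
    simp only [Set.mem_setOf_eq] at hd1 hd2
    by_cases hfu : d.fst = u
    · have hadj : L.Adj d.snd u := (hfu ▸ d.adj).symm
      have hP1 : P (k + 1) :=
        ⟨d.snd, v, SimpleGraph.Walk.cons hadj w, hw.cons hd2, by simp [hwl]⟩
      have := hmax _ hP1; omega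
    by_cases hfv : d.fst = v
    · have hadj : L.Adj d.snd v := (hfv ▸ d.adj).symm
      have hns : d.snd ∉ w.reverse.support := by
        simpa [SimpleGraph.Walk.support_reverse] using hd2
      have hP1 : P (k + 1) :=
        ⟨d.snd, u, SimpleGraph.Walk.cons hadj w.reverse, hw.reverse.cons hns, by simp [hwl]⟩
      have := hmax _ hP1; omega
    · obtain ⟨i, hgi, hik⟩ := SimpleGraph.Walk.mem_support_iff_exists_getVert.mp hd1
      have hi0 : i ≠ 0 := by
        rintro rfl
        apply hfu
        rw [← hgi, SimpleGraph.Walk.getVert_zero]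
      have hikk : i ≠ w.length := by
        rintro rfl
        apply hfv
        rw [← hgi, SimpleGraph.Walk.getVert_length]
      have h1 : L.Adj (w.getVert (i - 1)) (w.getVert i) := by
        have h' := w.adj_getVert_succ (i := i - 1) (by omega)
        have h'' : i - 1 + 1 = i := by omega
        rwa [h''] at h'
      have h2 : L.Adj (w.getVert i) (w.getVert (i + 1)) := w.adj_getVert_succ (by omega)
      have hmem : ∀ m, m ≤ w.length → w.getVert m ∈ w.support := fun m hm =>
        SimpleGraph.Walk.mem_support_iff_exists_getVert.mpr ⟨m, rfl, hm⟩
      have h3 := aux_deg3 L (hgi ▸ h1.symm) (hgi ▸ h2) d.adj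
        (fun h => by have := aux_getVert_inj hw (i-1) (i+1) (by omega) (by omega) h; omega)
        (fun h => hd2 (h ▸ hmem (i-1) (by omega)))
        (fun h => hd2 (h ▸ hmem (i+1) (by omega)))
      have := hdeg d.fst; omega
  -- set up the bijective vertex enumeration
  have hwlk : w.length = k := hwl
  set n := k + 1 with hn
  set g : Fin n → VL := fun i => w.getVert i with hgdef
  have hinj' : ∀ (i j : ℕ) (hi : i < n) (hj : j < n), g ⟨i, hi⟩ = g ⟨j, hj⟩ → i = j :=
    fun i j hi hj h => aux_getVert_inj hw i j (by omega) (by omega) h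
  have hg_bij : Function.Bijective g := by
    constructor
    · rintro ⟨i, hi⟩ ⟨j, hj⟩ hij
      exact Fin.ext (hinj' i j hi hj hij)
    · intro y
      obtain ⟨i, h1, h2⟩ := SimpleGraph.Walk.mem_support_iff_exists_getVert.mp (hsupp y)
      exact ⟨⟨i, by omega⟩, h1⟩
  set e := Equiv.ofBijective g hg_bij with hedef
  have hge : ∀ a, g (e.symm a) = a := fun a => e.apply_symm_apply a
  have hstep : ∀ (i j : ℕ) (hi : i < n) (hj : j < n), i + 1 = j →
      L.Adj (g ⟨i, hi⟩) (g ⟨j, hj⟩) := by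
    intro i j hi hj hij
    subst hij
    have hlt : i < w.length := by omega
    exact w.adj_getVert_succ (i := i) hlt
  have hchord : ∀ (i j : ℕ) (hi : i < n) (hj : j < n), i < j →
      L.Adj (g ⟨i, hi⟩) (g ⟨j, hj⟩) → j = i + 1 ∨ (i = 0 ∧ j = n - 1) := by
    intro i j hi hj hij hadj
    by_cases hji : j = i + 1
    · exact Or.inl hji
    right
    have hi0 : i = 0 := by
      by_contra h0
      have h3 := aux_deg3 L (x := g ⟨i, hi⟩) (a := g ⟨i-1, by omega⟩)
        (b := g ⟨i+1, by omega⟩) (c := g ⟨j, hj⟩)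
        ((hstep (i-1) i (by omega) hi (by omega)).symm) (hstep i (i+1) hi (by omega) rfl) hadj
        (fun h => by have := hinj' (i-1) (i+1) (by omega) (by omega) h; omega)
        (fun h => by have := hinj' (i-1) j (by omega) hj h; omega)
        (fun h => by have := hinj' (i+1) j (by omega) hj h; omega)
      have := hdeg (g ⟨i, hi⟩); omega
    refine ⟨hi0, ?_⟩
    by_contra h0
    have hjn : j + 1 < n := by omega
    have h3 := aux_deg3 L (x := g ⟨j, hj⟩) (a := g ⟨j-1, by omega⟩)
      (b := g ⟨j+1, by omega⟩) (c := g ⟨i, hi⟩)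
      ((hstep (j-1) j (by omega) hj (by omega)).symm) (hstep j (j+1) hj (by omega) rfl) hadj.symm
      (fun h => by have := hinj' (j-1) (j+1) (by omega) (by omega) h; omega)
      (fun h => by have := hinj' (j-1) i (by omega) hi h; omega)
      (fun h => by have := hinj' (j+1) i (by omega) hi h; omega)
    have := hdeg (g ⟨j, hj⟩); omega
  have hn1 : 1 ≤ n := by omega
  by_cases hcyc : 3 ≤ n ∧ L.Adj (g ⟨0, by omega⟩) (g ⟨n - 1, by omega⟩)
  · -- cycle case
    obtain ⟨hn3, hadj0⟩ := hcyc
    left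
    refine ⟨n, hn3, ⟨⟨e.symm, ?_⟩⟩⟩
    intro a b
    have key : ∀ i j : Fin n, ((SimpleGraph.cycleGraph n).Adj i j ↔ L.Adj (g i) (g j)) := by
      intro i j
      rw [SimpleGraph.cycleGraph_adj']
      constructor
      · rintro (h | h)
        · rcases (aux_fin_sub hn3 j i).mp h with h' | h'
          · exact (hstep j i j.2 i.2 h'.symm).symm
          · have hi0 : i = ⟨0, by omega⟩ := Fin.ext (by simpa using h'.2)
            have hj1 : j = ⟨n - 1, by omega⟩ := Fin.ext (by simpa using h'.1)
            rw [hi0, hj1]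
            exact hadj0
        · rcases (aux_fin_sub hn3 i j).mp h with h' | h'
          · exact hstep i j i.2 j.2 h'.symm
          · have hj0 : j = ⟨0, by omega⟩ := Fin.ext (by simpa using h'.2)
            have hi1 : i = ⟨n - 1, by omega⟩ := Fin.ext (by simpa using h'.1)
            rw [hj0, hi1]
            exact hadj0.symm
      · intro hadj
        rcases lt_trichotomy (i : ℕ) (j : ℕ) with h | h | h
        · rcases hchord i j i.2 j.2 h (by rwa [Fin.eta, Fin.eta]) with h' | h'
          · exact Or.inr ((aux_fin_sub hn3 i j).mpr (Or.inl h'))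
          · exact Or.inl ((aux_fin_sub hn3 j i).mpr (Or.inr ⟨h'.2, h'.1⟩))
        · exact absurd (Fin.ext h ▸ hadj) (L.irrefl)
        · rcases hchord j i j.2 i.2 h (by rw [Fin.eta, Fin.eta]; exact hadj.symm) with h' | h'
          · exact Or.inl ((aux_fin_sub hn3 j i).mpr (Or.inl h'))
          · exact Or.inr ((aux_fin_sub hn3 i j).mpr (Or.inr ⟨h'.2, h'.1⟩))
    have := key (e.symm a) (e.symm b)
    rwa [hge a, hge b] at this
  · -- path case
    right
    refine ⟨n, ⟨⟨e.symm, ?_⟩⟩⟩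
    intro a b
    have key : ∀ i j : Fin n, ((SimpleGraph.pathGraph n).Adj i j ↔ L.Adj (g i) (g j)) := by
      intro i j
      rw [SimpleGraph.pathGraph_adj]
      constructor
      · rintro (h | h)
        · exact hstep i j i.2 j.2 h
        · exact (hstep j i j.2 i.2 h).symm
      · intro hadj
        rcases lt_trichotomy (i : ℕ) (j : ℕ) with h | h | h
        · rcases hchord i j i.2 j.2 h (by rwa [Fin.eta, Fin.eta]) with h' | h'
          · exact Or.inl h'.symm
          · by_cases hsm : (i : ℕ) + 1 = (j : ℕ)
            · exact Or.inl hsm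
            exfalso
            apply hcyc
            have hj2 := j.2
            refine ⟨by omega, ?_⟩
            have hi0 : i = ⟨0, by omega⟩ := Fin.ext (by simpa using h'.1)
            have hj1 : j = ⟨n - 1, by omega⟩ := Fin.ext (by simpa using h'.2)
            rw [hi0, hj1] at hadj
            exact hadj
        · exact absurd (Fin.ext h ▸ hadj) (L.irrefl)
        · rcases hchord j i j.2 i.2 h (by rw [Fin.eta, Fin.eta]; exact hadj.symm) with h' | h'
          · exact Or.inr h'.symm
          · by_cases hsm : (j : ℕ) + 1 = (i : ℕ)
            · exact Or.inr hsm
            exfalso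
            apply hcyc
            have hi2 := i.2
            refine ⟨by omega, ?_⟩
            have hj0 : j = ⟨0, by omega⟩ := Fin.ext (by simpa using h'.1)
            have hi1 : i = ⟨n - 1, by omega⟩ := Fin.ext (by simpa using h'.2)
            rw [hj0, hi1] at hadj
            exact hadj.symm
    have := key (e.symm a) (e.symm b)
    rwa [hge a, hge b] at this
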